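/- Let H be a hypergraph with an Euler family F and incidence graph G, let G_F be the subgraph of G corresponding to F, and let C be an F-interchanging cycle of G. If the edges of C that belong to G_F lie in pairwise distinct connected components of G_F, then C is an F-diminishing cycle. -/

import Mathlib

open scoped Classical

/-- A hypergraph: a finite nonempty vertex type `V`, a finite index type `E` of
edges (so that repeated edges are allowed, as in a multiset of edges), and a map
`mem` assigning to each edge the finite set of its vertices. -/
structure HGraphE where
  V : Type
  E : Type
  [fintypeV : Fintype V]
  [fintypeE : Fintype E]
  [nonemptyV : Nonempty V]
  mem : E → Finset V

attribute [instance] HGraphE.fintypeV HGraphE.fintypeE HGraphE.nonemptyV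

namespace HGraphE

/-- A walk `v₀ e₁ v₁ e₂ … e_k v_k` in a hypergraph: consecutive anchors are
distinct and both lie in the connecting edge. -/
structure Walk (H : HGraphE) where
  k : ℕ
  vtx : Fin (k + 1) → H.V
  edge : Fin k → H.E
  mem_left : ∀ i : Fin k, vtx i.castSucc ∈ H.mem (edge i)
  mem_right : ∀ i : Fin k, vtx i.succ ∈ H.mem (edge i)
  ne : ∀ i : Fin k, vtx i.castSucc ≠ vtx i.succ

/-- A trail is a walk with pairwise distinct edges. -/
def Walk.IsTrail {H : HGraphE} (W : H.Walk) : Prop :=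
  Function.Injective W.edge

/-- A closed walk: `v₀ = v_k` and `k ≥ 2`. -/
def Walk.IsClosed {H : HGraphE} (W : H.Walk) : Prop :=
  W.vtx 0 = W.vtx (Fin.last W.k) ∧ 2 ≤ W.k

def Walk.IsClosedTrail {H : HGraphE} (W : H.Walk) : Prop :=
  W.IsTrail ∧ W.IsClosed

/-- The anchors of a walk. -/
def Walk.anchors {H : HGraphE} (W : H.Walk) : Set H.V := Set.range W.vtx

/-- The set of edges traversed by a walk. -/
def Walk.edgeSet {H : HGraphE} (W : H.Walk) : Set H.E := Set.range W.edge

/-- An Euler tour: a closed trail traversing every edge exactly once. -/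
def IsEulerTour (H : HGraphE) (W : H.Walk) : Prop :=
  W.IsClosedTrail ∧ Function.Bijective W.edge

def HasEulerTour (H : HGraphE) : Prop := ∃ W : H.Walk, H.IsEulerTour W

/-- A hypergraph is eulerian if it has no edges or admits an Euler tour. -/
def IsEulerian (H : HGraphE) : Prop := IsEmpty H.E ∨ H.HasEulerTour

/-- An Euler family: a set of pairwise anchor-disjoint, edge-disjoint closed
trails jointly traversing every edge exactly once. -/
def IsEulerFamily (H : HGraphE) (F : Set H.Walk) : Prop :=
  (∀ W ∈ F, W.IsClosedTrail) ∧
  (∀ W ∈ F, ∀ W' ∈ F, W ≠ W' →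
    Disjoint W.anchors W'.anchors ∧ Disjoint W.edgeSet W'.edgeSet) ∧
  (∀ e : H.E, ∃ W ∈ F, e ∈ W.edgeSet)

/-- A hypergraph is quasi-eulerian if it has no edges or admits an Euler family. -/
def IsQuasiEulerian (H : HGraphE) : Prop :=
  IsEmpty H.E ∨ ∃ F : Set H.Walk, H.IsEulerFamily F

/-- A minimum Euler family: one with the fewest components. -/
def IsMinEulerFamily (H : HGraphE) (F : Set H.Walk) : Prop :=
  H.IsEulerFamily F ∧ ∀ F' : Set H.Walk, H.IsEulerFamily F' → F.ncard ≤ F'.ncard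

/-- `H` is `k`-uniform if each edge has exactly `k` vertices. -/
def IsUniform (H : HGraphE) (k : ℕ) : Prop := ∀ e : H.E, (H.mem e).card = k

/-- A covering `k`-hypergraph (`k ≥ 3`): a nonempty `k`-uniform hypergraph in
which every `(k-1)`-subset of the vertex set lies in at least one edge. -/
def IsCovering (H : HGraphE) (k : ℕ) : Prop :=
  3 ≤ k ∧ Nonempty H.E ∧ H.IsUniform k ∧
    ∀ S : Finset H.V, S.card = k - 1 → ∃ e : H.E, S ⊆ H.mem e

/-- The incidence graph of a hypergraph: the bipartite simple graph on
`V ⊕ E` joining `v` and `e` exactly when `v ∈ e`. -/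
def incidenceGraph (H : HGraphE) : SimpleGraph (H.V ⊕ H.E) where
  Adj x y :=
    (∃ v e, x = Sum.inl v ∧ y = Sum.inr e ∧ v ∈ H.mem e) ∨
    (∃ v e, x = Sum.inr e ∧ y = Sum.inl v ∧ v ∈ H.mem e)
  symm := by
    constructor
    rintro x y (⟨v, e, rfl, rfl, h⟩ | ⟨v, e, rfl, rfl, h⟩)
    · exact Or.inr ⟨v, e, rfl, rfl, h⟩
    · exact Or.inl ⟨v, e, rfl, rfl, h⟩
  loopless := by
    constructor
    rintro x (⟨v, e, rfl, h, -⟩ | ⟨v, e, rfl, h, -⟩) <;> exact absurd h (by simp)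

/-- `v` and `e` appear consecutively in some trail of the family `F`. -/
def ConsecIn (H : HGraphE) (F : Set H.Walk) (v : H.V) (e : H.E) : Prop :=
  ∃ W ∈ F, ∃ i : Fin W.k, W.edge i = e ∧ (W.vtx i.castSucc = v ∨ W.vtx i.succ = v)

/-- The spanning subgraph of the incidence graph corresponding to an Euler
family `F`: its edges are the incident pairs `ve` consecutive in some trail of `F`. -/
def eulerSubgraph (H : HGraphE) (F : Set H.Walk) : SimpleGraph (H.V ⊕ H.E) where
  Adj x y :=
    (∃ v e, x = Sum.inl v ∧ y = Sum.inr e ∧ H.ConsecIn F v e) ∨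
    (∃ v e, x = Sum.inr e ∧ y = Sum.inl v ∧ H.ConsecIn F v e)
  symm := by
    constructor
    rintro x y (⟨v, e, rfl, rfl, h⟩ | ⟨v, e, rfl, rfl, h⟩)
    · exact Or.inr ⟨v, e, rfl, rfl, h⟩
    · exact Or.inl ⟨v, e, rfl, rfl, h⟩
  loopless := by
    constructor
    rintro x (⟨v, e, rfl, h, -⟩ | ⟨v, e, rfl, h, -⟩) <;> exact absurd h (by simp)

end HGraphE

/-- The degree of a vertex of a simple graph (number of neighbours). -/
noncomputable def sdeg {α : Type*} (G : SimpleGraph α) (x : α) : ℕ :=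
  (G.neighborSet x).ncard

/-- A connected component of a simple graph is nontrivial if it contains an edge. -/
def NontrivComp {α : Type*} (G : SimpleGraph α) (c : G.ConnectedComponent) : Prop :=
  ∃ x y, G.Adj x y ∧ G.connectedComponentMk x = c

/-- The number of nontrivial connected components of a simple graph. -/
noncomputable def ntComps {α : Type*} (G : SimpleGraph α) : ℕ :=
  {c : G.ConnectedComponent | NontrivComp G c}.ncard

/-- A cut vertex of a simple graph: a vertex whose deletion increases the number
of connected components, i.e. some two vertices distinct from it are joined by a
walk but by no walk avoiding it. -/
def IsCutVtx {α : Type*} (G : SimpleGraph α) (v : α) : Prop :=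
  ∃ x y, x ≠ v ∧ y ≠ v ∧ G.Reachable x y ∧ ¬ ∃ p : G.Walk x y, v ∉ p.support

/-- An `F`-interchanging cycle: a cycle of the incidence graph such that every
e-vertex on it is incident in `G_F` with exactly one edge of the cycle. -/
def IsInterchanging (H : HGraphE) (F : Set H.Walk) {x : H.V ⊕ H.E}
    (C : (H.incidenceGraph).Walk x x) : Prop :=
  C.IsCycle ∧ ∀ e : H.E, (Sum.inr e : H.V ⊕ H.E) ∈ C.support →
    ∃! s : Sym2 (H.V ⊕ H.E),
      s ∈ C.edges ∧ (Sum.inr e : H.V ⊕ H.E) ∈ s ∧ s ∈ (H.eulerSubgraph F).edgeSet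

/-- The symmetric difference of a simple graph with a set of potential edges. -/
def symmDiffEdges {α : Type*} (G : SimpleGraph α) (s : Set (Sym2 α)) : SimpleGraph α :=
  SimpleGraph.fromEdgeSet (symmDiff G.edgeSet s)

/-- An `F`-diminishing cycle: an `F`-interchanging cycle `C` such that
`G_F Δ C` has fewer nontrivial connected components than `G_F`. -/
def IsDiminishing (H : HGraphE) (F : Set H.Walk) {x : H.V ⊕ H.E}
    (C : (H.incidenceGraph).Walk x x) : Prop :=
  IsInterchanging H F C ∧
    ntComps (symmDiffEdges (H.eulerSubgraph F) {s | s ∈ C.edges}) <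
      ntComps (H.eulerSubgraph F)

open Sum

section Chain

variable {α : Type*}

lemma chain_reach (Γ : SimpleGraph α) (f : ℕ → α) :
    ∀ T : ℕ, (∀ t, t < T → Γ.Adj (f t) (f (t+1))) → Γ.Reachable (f 0) (f T) := by
  intro T
  induction T with
  | zero => exact fun _ => SimpleGraph.Reachable.refl _
  | succ n ih => exact fun h => (ih fun t ht => h t (by omega)).trans (h n (by omega)).reachable

end Chain

namespace HGraphE

variable (H : HGraphE) (W : H.Walk)

def vvv (hk : 0 < W.k) (j : ℕ) : H.V :=
  W.vtx ⟨j % W.k, by have := Nat.mod_lt j hk; omega⟩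

def eee (hk : 0 < W.k) (j : ℕ) : H.E :=
  W.edge ⟨j % W.k, Nat.mod_lt j hk⟩

lemma vvv_castSucc (hk : 0 < W.k) (j : ℕ) :
    vvv H W hk j = W.vtx (Fin.castSucc ⟨j % W.k, Nat.mod_lt j hk⟩) := rfl

lemma vvv_succ (hk : 0 < W.k) (hcl : W.vtx 0 = W.vtx (Fin.last W.k)) (hk2 : 2 ≤ W.k) (j : ℕ) :
    vvv H W hk (j+1) = W.vtx (Fin.succ ⟨j % W.k, Nat.mod_lt j hk⟩) := by
  have hmod : (j + 1) % W.k = (j % W.k + 1) % W.k := by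
    conv_lhs => rw [Nat.add_mod, Nat.mod_eq_of_lt (show 1 < W.k by omega)]
  have hlt := Nat.mod_lt j hk
  by_cases h : j % W.k + 1 = W.k
  · have h0 : (j + 1) % W.k = 0 := by rw [hmod, h, Nat.mod_self]
    have e2 : (Fin.succ ⟨j % W.k, Nat.mod_lt j hk⟩ : Fin (W.k+1)) = Fin.last W.k := by
      apply Fin.ext; simpa using h
    rw [e2, ← hcl]
    unfold vvv
    congr 1
    apply Fin.ext
    simpa using h0
  · have h0 : (j + 1) % W.k = j % W.k + 1 := by
      rw [hmod, Nat.mod_eq_of_lt (by omega)]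
    unfold vvv
    congr 1
    apply Fin.ext
    simpa using h0

def nodeSeq (hk : 0 < W.k) (off : ℕ) (t : ℕ) : H.V ⊕ H.E :=
  if t % 2 = 0 then inl (vvv H W hk (off + t/2)) else inr (eee H W hk (off + t/2))

lemma nodeSeq_even (hk : 0 < W.k) (off m : ℕ) :
    nodeSeq H W hk off (2*m) = inl (vvv H W hk (off + m)) := by
  have h1 : (2*m) % 2 = 0 := by omega
  have h2 : (2*m) / 2 = m := by omega
  simp [nodeSeq, h1, h2]

lemma nodeSeq_odd (hk : 0 < W.k) (off m : ℕ) :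
    nodeSeq H W hk off (2*m+1) = inr (eee H W hk (off + m)) := by
  have h1 : (2*m+1) % 2 = 1 := by omega
  have h2 : (2*m+1) / 2 = m := by omega
  simp [nodeSeq, h1, h2]

lemma around (hk : 0 < W.k) (Γ : SimpleGraph (H.V ⊕ H.E)) (off T : ℕ)
    (h1 : ∀ m, 2*m < T → Γ.Adj (inl (vvv H W hk (off+m))) (inr (eee H W hk (off+m))))
    (h2 : ∀ m, 2*m+1 < T → Γ.Adj (inr (eee H W hk (off+m))) (inl (vvv H W hk (off+m+1)))) :
    Γ.Reachable (nodeSeq H W hk off 0) (nodeSeq H W hk off T) := by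
  apply chain_reach
  intro t ht
  rcases Nat.even_or_odd t with ⟨m, hm⟩ | ⟨m, hm⟩
  · have h : t = 2*m := by omega
    subst h
    rw [nodeSeq_even, show 2*m+1 = 2*m+1 from rfl, nodeSeq_odd]
    exact h1 m ht
  · have h : t = 2*m+1 := by omega
    subst h
    rw [nodeSeq_odd, show 2*m+1+1 = 2*(m+1) from by ring, nodeSeq_even,
      show off + (m+1) = off + m + 1 from by ring]
    exact h2 m ht

lemma mod_trick {k : ℕ} (hk : 0 < k) (a b : ℕ) : (a + (b % k + (k - a % k))) % k = b % k := by
  have h1 : a % k < k := Nat.mod_lt a hk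
  have h3 := Nat.div_add_mod a k
  have h4 : k * (a / k + 1) = k * (a / k) + k := by ring
  have h2 : a + (b % k + (k - a % k)) = k * (a / k + 1) + b % k := by omega
  rw [h2, Nat.mul_add_mod, Nat.mod_mod_of_dvd b (dvd_refl k)]

lemma reach_vv (hk : 0 < W.k) (Γ : SimpleGraph (H.V ⊕ H.E))
    (h1 : ∀ j : ℕ, Γ.Adj (inl (vvv H W hk j)) (inr (eee H W hk j)))
    (h2 : ∀ j : ℕ, Γ.Adj (inr (eee H W hk j)) (inl (vvv H W hk (j+1)))) (a b : ℕ) :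
    Γ.Reachable (inl (vvv H W hk a)) (inl (vvv H W hk b)) := by
  have h := around H W hk Γ a (2*(b % W.k + (W.k - a % W.k)))
    (fun m _ => h1 _) (fun m _ => h2 _)
  rw [show (0:ℕ) = 2*0 from rfl, nodeSeq_even, nodeSeq_even] at h
  have he : vvv H W hk (a + (b % W.k + (W.k - a % W.k))) = vvv H W hk b := by
    unfold vvv; congr 1; apply Fin.ext; simpa using mod_trick hk a b
  rw [he] at h
  simpa using h

lemma reach_ee (hk : 0 < W.k) (Γ : SimpleGraph (H.V ⊕ H.E))
    (h1 : ∀ j : ℕ, Γ.Adj (inl (vvv H W hk j)) (inr (eee H W hk j)))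
    (h2 : ∀ j : ℕ, Γ.Adj (inr (eee H W hk j)) (inl (vvv H W hk (j+1)))) (a b : ℕ) :
    Γ.Reachable (inr (eee H W hk a)) (inr (eee H W hk b)) :=
  ((h1 a).symm.reachable.trans (reach_vv H W hk Γ h1 h2 a b)).trans (h1 b).reachable

lemma eee_self (hk : 0 < W.k) (i : Fin W.k) : eee H W hk i.val = W.edge i := by
  unfold eee; congr 1; apply Fin.ext; simpa using Nat.mod_eq_of_lt i.isLt

lemma vvv_self (hk : 0 < W.k) (i : Fin W.k) : vvv H W hk i.val = W.vtx i.castSucc := by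
  unfold vvv; congr 1; apply Fin.ext; simpa using Nat.mod_eq_of_lt i.isLt

lemma vvv_succ_self (hk : 0 < W.k) (hcl : W.vtx 0 = W.vtx (Fin.last W.k)) (hk2 : 2 ≤ W.k)
    (i : Fin W.k) : vvv H W hk (i.val + 1) = W.vtx i.succ := by
  rw [vvv_succ H W hk hcl hk2]
  congr 1
  apply Fin.ext
  simp [Nat.mod_eq_of_lt i.isLt]

lemma not_res_eq {k : ℕ} (i : Fin k) (m : ℕ) (hm : m + 1 < k) :
    (i.val + 1 + m) % k ≠ i.val := by
  intro h
  have hk : 0 < k := by omega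
  have h1 : i.val % k = i.val := Nat.mod_eq_of_lt i.isLt
  have hmeq : i.val % k = (i.val + 1 + m) % k := by rw [h1, h]
  have hdvd : k ∣ (i.val + 1 + m) - i.val := (Nat.modEq_iff_dvd' (by omega)).mp hmeq
  have : k ∣ m + 1 := by
    have he : i.val + 1 + m - i.val = m + 1 := by omega
    rwa [he] at hdvd
  have := Nat.le_of_dvd (by omega) this
  omega

lemma around_case2 (hk : 0 < W.k) (hcl : W.vtx 0 = W.vtx (Fin.last W.k)) (hk2 : 2 ≤ W.k)
    (Γ : SimpleGraph (H.V ⊕ H.E)) (i : Fin W.k)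
    (h1 : ∀ j : ℕ, Γ.Adj (inl (vvv H W hk j)) (inr (eee H W hk j)))
    (h2 : ∀ j : ℕ, j % W.k ≠ i.val → Γ.Adj (inr (eee H W hk j)) (inl (vvv H W hk (j+1)))) :
    Γ.Reachable (inl (W.vtx i.succ)) (inr (W.edge i)) := by
  have h := around H W hk Γ (i.val+1) (2*(W.k-1)+1)
    (fun m _ => h1 _)
    (fun m hm => h2 _ (by
      have hv : (i.val + 1 + m) % W.k ≠ i.val := not_res_eq i m (by omega)
      exact hv))
  rw [show (0:ℕ) = 2*0 from rfl, nodeSeq_even, nodeSeq_odd] at h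
  have e1 : vvv H W hk (i.val + 1 + 0) = W.vtx i.succ := by
    rw [show i.val + 1 + 0 = i.val + 1 from rfl]; exact vvv_succ_self H W hk hcl hk2 i
  have e2 : eee H W hk (i.val + 1 + (W.k - 1)) = W.edge i := by
    unfold eee; congr 1; apply Fin.ext
    have : i.val + 1 + (W.k - 1) = i.val + W.k := by omega
    simp [this, Nat.add_mod_right, Nat.mod_eq_of_lt i.isLt]
  rw [e1, e2] at h
  exact h

lemma around_case1 (hk : 0 < W.k) (hcl : W.vtx 0 = W.vtx (Fin.last W.k)) (hk2 : 2 ≤ W.k)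
    (Γ : SimpleGraph (H.V ⊕ H.E)) (i : Fin W.k)
    (h1 : ∀ j : ℕ, j % W.k ≠ i.val → Γ.Adj (inl (vvv H W hk j)) (inr (eee H W hk j)))
    (h2 : ∀ j : ℕ, Γ.Adj (inr (eee H W hk j)) (inl (vvv H W hk (j+1)))) :
    Γ.Reachable (inr (W.edge i)) (inl (W.vtx i.castSucc)) := by
  have step0 : Γ.Adj (inr (W.edge i)) (inl (vvv H W hk (i.val+1))) := by
    have := h2 i.val
    rwa [eee_self H W hk i] at this
  have h := around H W hk Γ (i.val+1) (2*(W.k-1))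
    (fun m hm => h1 _ (not_res_eq i m (by omega)))
    (fun m _ => h2 _)
  rw [show (0:ℕ) = 2*0 from rfl, nodeSeq_even, nodeSeq_even] at h
  have e2 : vvv H W hk (i.val + 1 + (W.k - 1)) = W.vtx i.castSucc := by
    unfold vvv; congr 1; apply Fin.ext
    have : i.val + 1 + (W.k - 1) = i.val + W.k := by omega
    simp [this, Nat.add_mod_right, Nat.mod_eq_of_lt i.isLt]
  rw [e2] at h
  exact step0.reachable.trans (by simpa using h)

end HGraphE

namespace HGraphE

variable (H : HGraphE) (W : H.Walk)

lemma GF_link1 (F : Set H.Walk) (hW : W ∈ F) (hk : 0 < W.k) (j : ℕ) :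
    (H.eulerSubgraph F).Adj (Sum.inl (vvv H W hk j)) (Sum.inr (eee H W hk j)) :=
  Or.inl ⟨_, _, rfl, rfl, ⟨W, hW, ⟨j % W.k, Nat.mod_lt j hk⟩, rfl, Or.inl rfl⟩⟩

lemma GF_link2 (F : Set H.Walk) (hW : W ∈ F) (hk : 0 < W.k)
    (hcl : W.vtx 0 = W.vtx (Fin.last W.k)) (hk2 : 2 ≤ W.k) (j : ℕ) :
    (H.eulerSubgraph F).Adj (Sum.inr (eee H W hk j)) (Sum.inl (vvv H W hk (j+1))) :=
  Or.inr ⟨_, _, rfl, rfl, ⟨W, hW, ⟨j % W.k, Nat.mod_lt j hk⟩, rfl,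
    Or.inr (vvv_succ H W hk hcl hk2 j).symm⟩⟩

lemma GF_edge_shape (F : Set H.Walk) (s : Sym2 (H.V ⊕ H.E))
    (hs : s ∈ (H.eulerSubgraph F).edgeSet) :
    ∃ v e, s = s(Sum.inl v, Sum.inr e) ∧ H.ConsecIn F v e := by
  induction s using Sym2.ind with
  | _ a b =>
    rcases (SimpleGraph.mem_edgeSet _).mp hs with ⟨v, e, rfl, rfl, h⟩ | ⟨v, e, rfl, rfl, h⟩
    · exact ⟨v, e, rfl, h⟩
    · exact ⟨v, e, Sym2.eq_swap, h⟩

end HGraphE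

/-- Corollary 4.8: if the `G_F`-edges of an `F`-interchanging cycle `C` lie in
pairwise distinct connected components of `G_F`, then `C` is `F`-diminishing. -/
theorem interchanging_distinct_components_diminishing (H : HGraphE)
    (F : Set H.Walk) (hF : H.IsEulerFamily F) {x : H.V ⊕ H.E}
    (C : (H.incidenceGraph).Walk x x) (hC : IsInterchanging H F C)
    (hdist : ∀ s ∈ C.edges, s ∈ (H.eulerSubgraph F).edgeSet →
      ∀ t ∈ C.edges, t ∈ (H.eulerSubgraph F).edgeSet →
      (∃ a b, a ∈ s ∧ b ∈ t ∧ (H.eulerSubgraph F).Reachable a b) → s = t) :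
    IsDiminishing H F C := by
  classical
  have hG'adj : ∀ a b : H.V ⊕ H.E,
      (symmDiffEdges (H.eulerSubgraph F) {s | s ∈ C.edges}).Adj a b ↔
        s(a,b) ∈ symmDiff (H.eulerSubgraph F).edgeSet {s | s ∈ C.edges} ∧ a ≠ b :=
    fun a b => SimpleGraph.fromEdgeSet_adj _
  have hG'_of_GF : ∀ a b, (H.eulerSubgraph F).Adj a b → s(a,b) ∉ C.edges →
      (symmDiffEdges (H.eulerSubgraph F) {s | s ∈ C.edges}).Adj a b := by
    intro a b h hc
    exact (hG'adj a b).mpr ⟨Set.mem_symmDiff.mpr (Or.inl ⟨h, hc⟩), h.ne⟩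
  have hG'_of_C : ∀ a b : H.V ⊕ H.E, a ≠ b → s(a,b) ∈ C.edges →
      s(a,b) ∉ (H.eulerSubgraph F).edgeSet →
      (symmDiffEdges (H.eulerSubgraph F) {s | s ∈ C.edges}).Adj a b := by
    intro a b hne hc hgf
    exact (hG'adj a b).mpr ⟨Set.mem_symmDiff.mpr (Or.inr ⟨hc, hgf⟩), hne⟩
  have hG'_inv : ∀ a b, (symmDiffEdges (H.eulerSubgraph F) {s | s ∈ C.edges}).Adj a b →
      ((H.eulerSubgraph F).Adj a b ∧ s(a,b) ∉ C.edges) ∨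
      (s(a,b) ∈ C.edges ∧ ¬ (H.eulerSubgraph F).Adj a b) := by
    intro a b h
    rcases Set.mem_symmDiff.mp ((hG'adj a b).mp h).1 with ⟨h1, h2⟩ | ⟨h1, h2⟩
    · exact Or.inl ⟨h1, h2⟩
    · exact Or.inr ⟨h1, h2⟩
  -- Key step : a C-edge that lies in G_F still has its endpoints connected in G'.
  have key : ∀ (v : H.V) (e : H.E), s(Sum.inl v, Sum.inr e) ∈ C.edges →
      s(Sum.inl v, Sum.inr e) ∈ (H.eulerSubgraph F).edgeSet →
      (symmDiffEdges (H.eulerSubgraph F) {s | s ∈ C.edges}).Reachable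
        (Sum.inl v) (Sum.inr e) := by
    intro v e hsC hsGF
    have hadj : (H.eulerSubgraph F).Adj (Sum.inl v) (Sum.inr e) :=
      (SimpleGraph.mem_edgeSet _).mp hsGF
    have hc : H.ConsecIn F v e := by
      rcases hadj with ⟨v', e', h1, h2, hcc⟩ | ⟨v', e', h1, h2, hcc⟩
      · cases h1; cases h2; exact hcc
      · simp at h1
    obtain ⟨W, hW, i, hei, hvi⟩ := hc
    subst hei
    obtain ⟨htr, hcl, hk2⟩ := hF.1 W hW
    have hk : 0 < W.k := by omega
    have g1 : ∀ j : ℕ, (H.eulerSubgraph F).Adj (Sum.inl (H.vvv W hk j))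
        (Sum.inr (H.eee W hk j)) := fun j => H.GF_link1 W F hW hk j
    have g2 : ∀ j : ℕ, (H.eulerSubgraph F).Adj (Sum.inr (H.eee W hk j))
        (Sum.inl (H.vvv W hk (j+1))) := fun j => H.GF_link2 W F hW hk hcl hk2 j
    have reachEE : ∀ j : ℕ, (H.eulerSubgraph F).Reachable (Sum.inr (W.edge i))
        (Sum.inr (H.eee W hk j)) := by
      intro j
      have h := H.reach_ee W hk (H.eulerSubgraph F) g1 g2 i.val j
      rwa [H.eee_self W hk i] at h
    have huniq : ∀ j : ℕ, H.eee W hk j = W.edge i →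
        (⟨j % W.k, Nat.mod_lt j hk⟩ : Fin W.k) = i := fun j h => htr h
    have h1' : ∀ j : ℕ,
        s(Sum.inl (H.vvv W hk j), Sum.inr (H.eee W hk j)) ≠ s(Sum.inl v, Sum.inr (W.edge i)) →
        (symmDiffEdges (H.eulerSubgraph F) {s | s ∈ C.edges}).Adj
          (Sum.inl (H.vvv W hk j)) (Sum.inr (H.eee W hk j)) := by
      intro j hne
      by_cases hcc : s(Sum.inl (H.vvv W hk j), Sum.inr (H.eee W hk j)) ∈ C.edges
      · exact absurd (hdist _ hsC hsGF _ hcc ((SimpleGraph.mem_edgeSet _).mpr (g1 j))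
          ⟨Sum.inr (W.edge i), Sum.inr (H.eee W hk j), by simp, by simp, reachEE j⟩).symm hne
      · exact hG'_of_GF _ _ (g1 j) hcc
    have h2' : ∀ j : ℕ,
        s(Sum.inr (H.eee W hk j), Sum.inl (H.vvv W hk (j+1))) ≠
          s(Sum.inl v, Sum.inr (W.edge i)) →
        (symmDiffEdges (H.eulerSubgraph F) {s | s ∈ C.edges}).Adj
          (Sum.inr (H.eee W hk j)) (Sum.inl (H.vvv W hk (j+1))) := by
      intro j hne
      by_cases hcc : s(Sum.inr (H.eee W hk j), Sum.inl (H.vvv W hk (j+1))) ∈ C.edges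
      · exact absurd (hdist _ hsC hsGF _ hcc ((SimpleGraph.mem_edgeSet _).mpr (g2 j))
          ⟨Sum.inr (W.edge i), Sum.inr (H.eee W hk j), by simp, by simp, reachEE j⟩).symm hne
      · exact hG'_of_GF _ _ (g2 j) hcc
    rcases hvi with hv | hv
    · -- v = W.vtx i.castSucc : removed edge is "link1 at i"
      subst hv
      have ne1 : ∀ j : ℕ, j % W.k ≠ i.val →
          s(Sum.inl (H.vvv W hk j), Sum.inr (H.eee W hk j)) ≠
            s(Sum.inl (W.vtx i.castSucc), Sum.inr (W.edge i)) := by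
        intro j hj heq
        rcases Sym2.eq_iff.mp heq with ⟨hA, hB⟩ | ⟨hA, hB⟩
        · have := huniq j (by injection hB)
          exact hj (by rw [← this])
        · simp at hA
      have ne2 : ∀ j : ℕ,
          s(Sum.inr (H.eee W hk j), Sum.inl (H.vvv W hk (j+1))) ≠
            s(Sum.inl (W.vtx i.castSucc), Sum.inr (W.edge i)) := by
        intro j heq
        rcases Sym2.eq_iff.mp heq with ⟨hA, hB⟩ | ⟨hA, hB⟩
        · simp at hA
        · have hfin := huniq j (by injection hA)
          have hsucc : H.vvv W hk (j+1) = W.vtx i.succ := by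
            rw [H.vvv_succ W hk hcl hk2 j, hfin]
          have hBB : H.vvv W hk (j+1) = W.vtx i.castSucc := by injection hB
          exact W.ne i (by rw [← hBB, hsucc])
      exact (H.around_case1 W hk hcl hk2 _ i
        (fun j hj => h1' j (ne1 j hj)) (fun j => h2' j (ne2 j))).symm
    · -- v = W.vtx i.succ : removed edge is "link2 at i"
      subst hv
      have ne1 : ∀ j : ℕ,
          s(Sum.inl (H.vvv W hk j), Sum.inr (H.eee W hk j)) ≠
            s(Sum.inl (W.vtx i.succ), Sum.inr (W.edge i)) := by
        intro j heq
        rcases Sym2.eq_iff.mp heq with ⟨hA, hB⟩ | ⟨hA, hB⟩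
        · have hfin := huniq j (by injection hB)
          have hAA : H.vvv W hk j = W.vtx i.succ := by injection hA
          have : H.vvv W hk j = W.vtx i.castSucc := by
            rw [H.vvv_castSucc W hk j, hfin]
          exact W.ne i (by rw [← this, hAA])
        · simp at hA
      have ne2 : ∀ j : ℕ, j % W.k ≠ i.val →
          s(Sum.inr (H.eee W hk j), Sum.inl (H.vvv W hk (j+1))) ≠
            s(Sum.inl (W.vtx i.succ), Sum.inr (W.edge i)) := by
        intro j hj heq
        rcases Sym2.eq_iff.mp heq with ⟨hA, hB⟩ | ⟨hA, hB⟩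
        · simp at hA
        · have := huniq j (by injection hA)
          exact hj (by rw [← this])
      exact H.around_case2 W hk hcl hk2 _ i
        (fun j => h1' j (ne1 j)) (fun j hj => h2' j (ne2 j hj))
  -- T0 : endpoints of any C-edge are reachable in G'
  have T0 : ∀ a b : H.V ⊕ H.E, s(a,b) ∈ C.edges →
      (symmDiffEdges (H.eulerSubgraph F) {s | s ∈ C.edges}).Reachable a b := by
    intro a b hab
    by_cases hgf : s(a,b) ∈ (H.eulerSubgraph F).edgeSet
    · obtain ⟨v, e, hse, hcc⟩ := H.GF_edge_shape F _ hgf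
      rcases Sym2.eq_iff.mp hse with ⟨rfl, rfl⟩ | ⟨rfl, rfl⟩
      · exact key v e hab hgf
      · exact (key v e (by rwa [Sym2.eq_swap] at hab) (by rwa [Sym2.eq_swap] at hgf)).symm
    · exact (hG'_of_C a b (C.adj_of_mem_edges hab).ne hab hgf).reachable
  -- T1 : every vertex on C is reachable from x in G'
  have T1 : ∀ y ∈ C.support,
      (symmDiffEdges (H.eulerSubgraph F) {s | s ∈ C.edges}).Reachable x y := by
    suffices h : ∀ (u w : H.V ⊕ H.E) (P : (H.incidenceGraph).Walk u w),
        (∀ s ∈ P.edges, s ∈ C.edges) → ∀ y ∈ P.support,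
        (symmDiffEdges (H.eulerSubgraph F) {s | s ∈ C.edges}).Reachable u y by
      intro y hy
      exact h x x C (fun s hs => hs) y hy
    intro u w P
    induction P with
    | nil =>
      intro _ y hy
      rw [SimpleGraph.Walk.support_nil, List.mem_singleton] at hy
      subst hy
      exact SimpleGraph.Reachable.refl _
    | @cons u v w h p ih =>
      intro hsub y hy
      rw [SimpleGraph.Walk.support_cons, List.mem_cons] at hy
      rcases hy with rfl | hy
      · exact SimpleGraph.Reachable.refl _
      · have h1 := T0 u v (hsub _ (by rw [SimpleGraph.Walk.edges_cons]; exact List.mem_cons_self))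
        exact h1.trans (ih (fun s hs => hsub s (by rw [SimpleGraph.Walk.edges_cons]; exact List.mem_cons_of_mem _ hs)) y hy)
  -- Touched predicate
  have T2' : ∀ (u w : H.V ⊕ H.E) (P : (H.eulerSubgraph F).Walk u w),
      (symmDiffEdges (H.eulerSubgraph F) {s | s ∈ C.edges}).Reachable x u →
      (symmDiffEdges (H.eulerSubgraph F) {s | s ∈ C.edges}).Reachable x w := by
    intro u w P
    induction P with
    | nil => exact id
    | @cons u v w h p ih =>
      intro hu
      by_cases hcc : s(u, v) ∈ C.edges
      · exact ih (T1 v (C.snd_mem_support_of_mem_edges hcc))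
      · exact ih (hu.trans (hG'_of_GF _ _ h hcc).reachable)
  have T2 : ∀ a, (∃ y ∈ C.support, (H.eulerSubgraph F).Reachable a y) →
      (symmDiffEdges (H.eulerSubgraph F) {s | s ∈ C.edges}).Reachable x a := by
    rintro a ⟨y, hy, hr⟩
    obtain ⟨P⟩ := hr
    exact T2' y a P.reverse (T1 y hy)
  have TchGF : ∀ a b, (H.eulerSubgraph F).Adj a b →
      (∃ y ∈ C.support, (H.eulerSubgraph F).Reachable b y) →
      (∃ y ∈ C.support, (H.eulerSubgraph F).Reachable a y) := by
    rintro a b h ⟨y, hy, hr⟩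
    exact ⟨y, hy, h.reachable.trans hr⟩
  have T3a : ∀ a, ¬ (∃ y ∈ C.support, (H.eulerSubgraph F).Reachable a y) → ∀ b,
      ((symmDiffEdges (H.eulerSubgraph F) {s | s ∈ C.edges}).Adj a b ↔
        (H.eulerSubgraph F).Adj a b) := by
    intro a ha b
    constructor
    · intro h
      rcases hG'_inv a b h with ⟨h1, _⟩ | ⟨h1, h2⟩
      · exact h1
      · exact absurd ⟨a, C.fst_mem_support_of_mem_edges h1, SimpleGraph.Reachable.refl a⟩ ha
    · intro h
      by_cases hcc : s(a,b) ∈ C.edges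
      · exact absurd ⟨a, C.fst_mem_support_of_mem_edges hcc, SimpleGraph.Reachable.refl a⟩ ha
      · exact hG'_of_GF a b h hcc
  have T3b : ∀ (u w : H.V ⊕ H.E)
      (P : (symmDiffEdges (H.eulerSubgraph F) {s | s ∈ C.edges}).Walk u w),
      ¬ (∃ y ∈ C.support, (H.eulerSubgraph F).Reachable u y) →
      (H.eulerSubgraph F).Reachable u w := by
    intro u w P
    induction P with
    | nil => exact fun _ => SimpleGraph.Reachable.refl _
    | @cons u v w h p ih =>
      intro hu
      have hadj := (T3a u hu v).mp h
      have hv : ¬ (∃ y ∈ C.support, (H.eulerSubgraph F).Reachable v y) :=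
        fun htv => hu (TchGF _ _ hadj htv)
      exact hadj.reachable.trans (ih hv)
  have T3c : ∀ (u w : H.V ⊕ H.E) (P : (H.eulerSubgraph F).Walk u w),
      ¬ (∃ y ∈ C.support, (H.eulerSubgraph F).Reachable u y) →
      (symmDiffEdges (H.eulerSubgraph F) {s | s ∈ C.edges}).Reachable u w := by
    intro u w P
    induction P with
    | nil => exact fun _ => SimpleGraph.Reachable.refl _
    | @cons u v w h p ih =>
      intro hu
      have hadj := (T3a u hu v).mpr h
      have hv : ¬ (∃ y ∈ C.support, (H.eulerSubgraph F).Reachable v y) :=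
        fun htv => hu (TchGF _ _ h htv)
      exact hadj.reachable.trans (ih hv)
  -- getVert vs support.get
  have hgetsup : ∀ (u w : H.V ⊕ H.E) (P : (H.incidenceGraph).Walk u w) (j : ℕ)
      (hj : j < P.support.length), P.support.get ⟨j, hj⟩ = P.getVert j := by
    intro u w P
    induction P with
    | nil =>
      intro j hj
      have hj0 : j = 0 := by
        rw [SimpleGraph.Walk.support_nil, List.length_singleton] at hj
        omega
      subst hj0
      rfl
    | @cons u v w h p ih =>
      intro j hj
      match j with
      | 0 => rfl
      | Nat.succ m =>
        have hm : m < p.support.length := by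
          have h2 := hj
          rw [SimpleGraph.Walk.support_cons, List.length_cons] at h2
          omega
        exact ih m hm
  have hgettail : ∀ (u w : H.V ⊕ H.E) (P : (H.incidenceGraph).Walk u w) (j : ℕ)
      (hj : j < P.support.tail.length), P.support.tail.get ⟨j, hj⟩ = P.getVert (j+1) := by
    intro u w P
    cases P with
    | nil =>
      intro j hj
      rw [SimpleGraph.Walk.support_nil] at hj
      simp at hj
    | cons h p =>
      intro j hj
      exact hgetsup _ _ p j hj
  have hcyc := hC.1
  have hlen : 3 ≤ C.length := hcyc.three_le_length
  have hls : C.support.length = C.length + 1 := C.length_support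
  have hlt : C.support.tail.length = C.length := by
    rw [List.length_tail, hls]
    omega
  -- injectivity of getVert on [1, length]
  have hinj : ∀ j1 j2, 1 ≤ j1 → j1 ≤ C.length → 1 ≤ j2 → j2 ≤ C.length → j1 ≠ j2 →
      C.getVert j1 ≠ C.getVert j2 := by
    intro j1 j2 h11 h12 h21 h22 hne heq
    have hnd : C.support.tail.Nodup := hcyc.support_nodup
    have e1 := hgettail x x C (j1 - 1) (by omega)
    have e2 := hgettail x x C (j2 - 1) (by omega)
    rw [show j1 - 1 + 1 = j1 by omega] at e1
    rw [show j2 - 1 + 1 = j2 by omega] at e2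
    have hget : C.support.tail.get ⟨j1 - 1, by omega⟩ = C.support.tail.get ⟨j2 - 1, by omega⟩ := by
      rw [e1, e2, heq]
    have hfin := (hnd.get_inj_iff).mp hget
    rw [Fin.mk.injEq] at hfin
    omega
  -- extraction of two distinct e-vertices on C
  have hmemsup : ∀ j, j ≤ C.length → C.getVert j ∈ C.support := fun j hj =>
    (SimpleGraph.Walk.mem_support_iff_exists_getVert).mpr ⟨j, rfl, hj⟩
  have hside : ∀ a b : H.V ⊕ H.E, (H.incidenceGraph).Adj a b → a.isLeft = !b.isLeft := by
    intro a b h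
    rcases h with ⟨v, e, rfl, rfl, _⟩ | ⟨v, e, rfl, rfl, _⟩ <;> simp
  obtain ⟨e₁, e₂, hne12, hm1, hm2⟩ : ∃ e₁ e₂ : H.E, e₁ ≠ e₂ ∧
      (Sum.inr e₁ : H.V ⊕ H.E) ∈ C.support ∧ (Sum.inr e₂ : H.V ⊕ H.E) ∈ C.support := by
    have hA0 := hside _ _ (C.adj_getVert_succ (show 0 < C.length by omega))
    have hA1 := hside _ _ (C.adj_getVert_succ (show 1 < C.length by omega))
    have hA2 := hside _ _ (C.adj_getVert_succ (show 2 < C.length by omega))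
    rcases hu0 : C.getVert 0 with v0 | e0
    · -- x-side is a v-vertex, take getVert 1 and getVert 3
      rw [hu0] at hA0
      rcases hu1 : C.getVert 1 with v1 | e1
      · rw [hu1] at hA0; simp at hA0
      · rcases hu3 : C.getVert 3 with v3 | e3
        · rw [hu1] at hA1
          rcases hu2 : C.getVert 2 with v2 | e2
          · rw [hu2, hu3] at hA2; simp at hA2
          · rw [hu2] at hA1; simp at hA1
        · refine ⟨e1, e3, ?_, ?_, ?_⟩
          · intro heq
            exact hinj 1 3 (by omega) (by omega) (by omega) (by omega) (by omega)
              (by rw [hu1, hu3, heq])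
          · rw [← hu1]; exact hmemsup 1 (by omega)
          · rw [← hu3]; exact hmemsup 3 (by omega)
    · -- x-side is an e-vertex, take getVert 0 and getVert 2
      rw [hu0] at hA0
      rcases hu1 : C.getVert 1 with v1 | e1
      · rcases hu2 : C.getVert 2 with v2 | e2
        · rw [hu1, hu2] at hA1; simp at hA1
        · refine ⟨e0, e2, ?_, ?_, ?_⟩
          · intro heq
            have hge : C.getVert C.length = C.getVert 0 := by
              rw [C.getVert_length, C.getVert_zero]
            refine hinj 2 C.length (by omega) (by omega) (by omega) le_rfl (by omega) ?_
            rw [hge, hu0, hu2, heq]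
          · rw [← hu0]; exact hmemsup 0 (by omega)
          · rw [← hu2]; exact hmemsup 2 (by omega)
      · rw [hu1] at hA0; simp at hA0
  -- the two G_F-edges of C at e₁ and e₂
  obtain ⟨s₁, ⟨hs₁C, hs₁m, hs₁GF⟩, -⟩ := hC.2 e₁ hm1
  obtain ⟨s₂, ⟨hs₂C, hs₂m, hs₂GF⟩, -⟩ := hC.2 e₂ hm2
  obtain ⟨v₁, e₁', hs₁eq, hcon₁⟩ := H.GF_edge_shape F s₁ hs₁GF
  obtain ⟨v₂, e₂', hs₂eq, hcon₂⟩ := H.GF_edge_shape F s₂ hs₂GF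
  have he₁ : e₁' = e₁ := by
    rw [hs₁eq] at hs₁m
    rcases Sym2.mem_iff.mp hs₁m with h | h
    · simp at h
    · exact (Sum.inr_injective h).symm
  have he₂ : e₂' = e₂ := by
    rw [hs₂eq] at hs₂m
    rcases Sym2.mem_iff.mp hs₂m with h | h
    · simp at h
    · exact (Sum.inr_injective h).symm
  rw [he₁] at hs₁eq
  rw [he₂] at hs₂eq
  -- distinct nontrivial touched components
  have hD12 : (H.eulerSubgraph F).connectedComponentMk (Sum.inr e₁) ≠
      (H.eulerSubgraph F).connectedComponentMk (Sum.inr e₂) := by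
    intro h
    have hr : (H.eulerSubgraph F).Reachable (Sum.inr e₁) (Sum.inr e₂) :=
      (SimpleGraph.ConnectedComponent.eq).mp h
    have hss := hdist s₁ hs₁C hs₁GF s₂ hs₂C hs₂GF ⟨Sum.inr e₁, Sum.inr e₂, hs₁m, hs₂m, hr⟩
    rw [hs₁eq, hs₂eq] at hss
    rcases Sym2.eq_iff.mp hss with ⟨hA, hB⟩ | ⟨hA, hB⟩
    · exact hne12 (Sum.inr_injective hB)
    · simp at hA
  have hadj₁ : (H.eulerSubgraph F).Adj (Sum.inl v₁) (Sum.inr e₁) :=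
    (SimpleGraph.mem_edgeSet _).mp (hs₁eq ▸ hs₁GF)
  have hadj₂ : (H.eulerSubgraph F).Adj (Sum.inl v₂) (Sum.inr e₂) :=
    (SimpleGraph.mem_edgeSet _).mp (hs₂eq ▸ hs₂GF)
  have hnt₁ : NontrivComp (H.eulerSubgraph F)
      ((H.eulerSubgraph F).connectedComponentMk (Sum.inr e₁)) :=
    ⟨Sum.inl v₁, Sum.inr e₁, hadj₁, (SimpleGraph.ConnectedComponent.eq).mpr hadj₁.reachable⟩
  have hnt₂ : NontrivComp (H.eulerSubgraph F)
      ((H.eulerSubgraph F).connectedComponentMk (Sum.inr e₂)) :=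
    ⟨Sum.inl v₂, Sum.inr e₂, hadj₂, (SimpleGraph.ConnectedComponent.eq).mpr hadj₂.reachable⟩
  -- the counting
  refine ⟨hC, ?_⟩
  have hA2 : {c : (H.eulerSubgraph F).ConnectedComponent |
        NontrivComp (H.eulerSubgraph F) c ∧
        ∀ y ∈ C.support, (H.eulerSubgraph F).connectedComponentMk y ≠ c}.ncard + 2 ≤
      ntComps (H.eulerSubgraph F) := by
    set U := {c : (H.eulerSubgraph F).ConnectedComponent |
        NontrivComp (H.eulerSubgraph F) c ∧
        ∀ y ∈ C.support, (H.eulerSubgraph F).connectedComponentMk y ≠ c} with hU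
    set D₁ := (H.eulerSubgraph F).connectedComponentMk (Sum.inr e₁) with hD₁
    set D₂ := (H.eulerSubgraph F).connectedComponentMk (Sum.inr e₂) with hD₂
    have hsub : insert D₂ (insert D₁ U) ⊆
        {c : (H.eulerSubgraph F).ConnectedComponent | NontrivComp (H.eulerSubgraph F) c} := by
      rintro c hc
      rcases Set.mem_insert_iff.mp hc with rfl | hc
      · exact hnt₂
      rcases Set.mem_insert_iff.mp hc with rfl | hc
      · exact hnt₁
      · exact hc.1
    have hD1U : D₁ ∉ U := fun h => h.2 (Sum.inr e₁) hm1 rfl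
    have hD2I : D₂ ∉ insert D₁ U := by
      intro h
      rcases Set.mem_insert_iff.mp h with h | h
      · exact hD12 h.symm
      · exact h.2 (Sum.inr e₂) hm2 rfl
    have hcard : (insert D₂ (insert D₁ U)).ncard = U.ncard + 2 := by
      rw [Set.ncard_insert_of_notMem hD2I (Set.toFinite _),
        Set.ncard_insert_of_notMem hD1U (Set.toFinite _)]
    rw [ntComps, ← hcard]
    exact Set.ncard_le_ncard hsub (Set.toFinite _)
  have hB1 : ntComps (symmDiffEdges (H.eulerSubgraph F) {s | s ∈ C.edges}) ≤
      {c : (H.eulerSubgraph F).ConnectedComponent |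
        NontrivComp (H.eulerSubgraph F) c ∧
        ∀ y ∈ C.support, (H.eulerSubgraph F).connectedComponentMk y ≠ c}.ncard + 1 := by
    set U := {c : (H.eulerSubgraph F).ConnectedComponent |
        NontrivComp (H.eulerSubgraph F) c ∧
        ∀ y ∈ C.support, (H.eulerSubgraph F).connectedComponentMk y ≠ c} with hU
    set B := {c : (symmDiffEdges (H.eulerSubgraph F) {s | s ∈ C.edges}).ConnectedComponent |
        NontrivComp (symmDiffEdges (H.eulerSubgraph F) {s | s ∈ C.edges}) c} with hB
    set K := (symmDiffEdges (H.eulerSubgraph F) {s | s ∈ C.edges}).connectedComponentMk x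
      with hK
    have hrep : ∀ c : (symmDiffEdges (H.eulerSubgraph F) {s | s ∈ C.edges}).ConnectedComponent,
        ∃ v, (symmDiffEdges (H.eulerSubgraph F) {s | s ∈ C.edges}).connectedComponentMk v = c :=
      fun c => c.exists_rep
    choose rep hrepeq using hrep
    set g : (symmDiffEdges (H.eulerSubgraph F) {s | s ∈ C.edges}).ConnectedComponent →
        Option (H.eulerSubgraph F).ConnectedComponent := fun c =>
      if c = K then none else some ((H.eulerSubgraph F).connectedComponentMk (rep c)) with hgdef
    have hnotch : ∀ c, c ≠ K →
        ¬ (∃ y ∈ C.support, (H.eulerSubgraph F).Reachable (rep c) y) := by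
      intro c hcK ht
      refine hcK ?_
      rw [← hrepeq c, hK]
      exact (SimpleGraph.ConnectedComponent.eq).mpr (T2 _ ht).symm
    have hginj : Set.InjOn g B := by
      intro c₁ h₁ c₂ h₂ heq
      by_cases k1 : c₁ = K <;> by_cases k2 : c₂ = K
      · rw [k1, k2]
      · rw [hgdef] at heq; simp only [k1, k2, if_pos, if_neg, if_true] at heq
        exact absurd heq (by simp [k2])
      · rw [hgdef] at heq; simp only [k1, k2] at heq
        exact absurd heq (by simp [k1])
      · rw [hgdef] at heq
        simp only [k1, k2, if_neg] at heq
        have hmkeq : (H.eulerSubgraph F).connectedComponentMk (rep c₁) =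
            (H.eulerSubgraph F).connectedComponentMk (rep c₂) := by
          exact Option.some_injective _ heq
        have h12 : (H.eulerSubgraph F).Reachable (rep c₁) (rep c₂) :=
          (SimpleGraph.ConnectedComponent.eq).mp hmkeq
        obtain ⟨P⟩ := T3c _ _ h12.some (hnotch c₁ k1)
        rw [← hrepeq c₁, ← hrepeq c₂]
        exact (SimpleGraph.ConnectedComponent.eq).mpr ⟨P⟩
    have himg : g '' B ⊆ insert none (Option.some '' U) := by
      rintro o ⟨c, hcB, rfl⟩
      by_cases k1 : c = K
      · rw [hgdef]; simp [k1]
      · rw [hgdef]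
        simp only [k1, if_neg, Set.mem_insert_iff, if_false]
        right
        refine ⟨(H.eulerSubgraph F).connectedComponentMk (rep c), ?_, rfl⟩
        have hnt1 := hnotch c k1
        obtain ⟨p, q, hpq, hmkp⟩ := hcB
        have hrp : (symmDiffEdges (H.eulerSubgraph F) {s | s ∈ C.edges}).Reachable (rep c) p := by
          apply (SimpleGraph.ConnectedComponent.eq).mp
          rw [hrepeq c, ← hmkp]
        have hTp : ¬ (∃ y ∈ C.support, (H.eulerSubgraph F).Reachable p y) := by
          intro htp
          refine k1 ?_
          rw [← hrepeq c, hK]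
          exact (SimpleGraph.ConnectedComponent.eq).mpr ((T2 p htp).trans hrp.symm).symm
        have hGFrp : (H.eulerSubgraph F).Reachable (rep c) p := by
          obtain ⟨P⟩ := hrp
          exact T3b _ _ P hnt1
        constructor
        · exact ⟨p, q, (T3a p hTp q).mp hpq,
            (SimpleGraph.ConnectedComponent.eq).mpr hGFrp.symm⟩
        · intro y hy hmky
          exact hnt1 ⟨y, hy, (SimpleGraph.ConnectedComponent.eq).mp hmky.symm⟩
    calc ntComps (symmDiffEdges (H.eulerSubgraph F) {s | s ∈ C.edges}) = B.ncard := rfl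
      _ = (g '' B).ncard := (Set.ncard_image_of_injOn hginj).symm
      _ ≤ (insert none (Option.some '' U)).ncard := Set.ncard_le_ncard himg (Set.toFinite _)
      _ ≤ (Option.some '' U).ncard + 1 := Set.ncard_insert_le _ _
      _ = U.ncard + 1 := by rw [Set.ncard_image_of_injective _ (Option.some_injective _)]
  omega
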